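/- Let ρ be a d×d complex positive semidefinite matrix with trace 1, let 0 < α < 1, and let U_1, …, U_N (N ≥ 2) be d×d unitary matrices. Then for each x ∈ {0, 1}: ∑_{s=1}^N I^α_ρ(U_s) ≥ (1/(2N − 2)) · [ ∑_{1 ≤ s < t ≤ N} I^α_ρ(U_s + (−1)^x U_t) + (2/(N(N − 1))) · (∑_{1 ≤ s < t ≤ N} √(I^α_ρ(U_s + (−1)^{x+1} U_t)))² ], where √ denotes the real square root. -/

import Mathlib

open Matrix Finset
open scoped ComplexOrder

/-- `ρ^α` via the continuous functional calculus applied to `t ↦ t ^ α`. -/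
noncomputable def mpow {d : ℕ} (ρ : Matrix (Fin d) (Fin d) ℂ) (α : ℝ) :
    Matrix (Fin d) (Fin d) ℂ :=
  cfc (fun t : ℝ => t ^ α) ρ

/-- The Wigner–Yanase–Dyson skew information
`I^α_ρ(K) = −(1/2) Tr([ρ^α, K†] [ρ^{1−α}, K])` of an arbitrary matrix `K`. -/
noncomputable def wyd {d : ℕ} (ρ : Matrix (Fin d) (Fin d) ℂ) (α : ℝ)
    (K : Matrix (Fin d) (Fin d) ℂ) : ℝ :=
  (-(1 / 2 : ℂ) *
    ((mpow ρ α * Kᴴ - Kᴴ * mpow ρ α) * (mpow ρ (1 - α) * K - K * mpow ρ (1 - α))).trace).re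

lemma mpow_eq {d : ℕ} (ρ : Matrix (Fin d) (Fin d) ℂ) (hH : ρ.IsHermitian) (β : ℝ) :
    mpow ρ β = (hH.eigenvectorUnitary : Matrix (Fin d) (Fin d) ℂ) *
      diagonal (fun i => ((hH.eigenvalues i ^ β : ℝ) : ℂ)) *
      star (hH.eigenvectorUnitary : Matrix (Fin d) (Fin d) ℂ) := by
  rw [mpow, hH.cfc_eq]
  rfl

lemma diag_term_nonneg {a b α β : ℝ} (ha : 0 ≤ a) (hb : 0 ≤ b) (hα : 0 ≤ α) (hβ : 0 ≤ β) :
    0 ≤ (a ^ α - b ^ α) * (a ^ β - b ^ β) := by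
  rcases le_total a b with h | h
  · have h1 : a ^ α ≤ b ^ α := Real.rpow_le_rpow ha h hα
    have h2 : a ^ β ≤ b ^ β := Real.rpow_le_rpow ha h hβ
    nlinarith
  · have h1 : b ^ α ≤ a ^ α := Real.rpow_le_rpow hb h hα
    have h2 : b ^ β ≤ a ^ β := Real.rpow_le_rpow hb h hβ
    nlinarith

lemma wyd_nonneg {d : ℕ} (ρ : Matrix (Fin d) (Fin d) ℂ) (hρ : ρ.PosSemidef)
    {α : ℝ} (hα0 : 0 < α) (hα1 : α < 1) (K : Matrix (Fin d) (Fin d) ℂ) :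
    0 ≤ wyd ρ α K := by
  have hH : ρ.IsHermitian := hρ.1
  set V : Matrix (Fin d) (Fin d) ℂ := (hH.eigenvectorUnitary : Matrix (Fin d) (Fin d) ℂ) with hV
  set W : Matrix (Fin d) (Fin d) ℂ := star V with hW
  have hWV : W * V = 1 := mem_unitaryGroup_iff'.mp hH.eigenvectorUnitary.2
  have hVW : V * W = 1 := mem_unitaryGroup_iff.mp hH.eigenvectorUnitary.2
  set lam : Fin d → ℝ := hH.eigenvalues with hlam
  have hlamnn : ∀ i, 0 ≤ lam i := fun i => hρ.eigenvalues_nonneg i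
  set D₁ : Matrix (Fin d) (Fin d) ℂ := diagonal (fun i => ((lam i ^ α : ℝ) : ℂ)) with hD₁
  set D₂ : Matrix (Fin d) (Fin d) ℂ := diagonal (fun i => ((lam i ^ (1 - α) : ℝ) : ℂ)) with hD₂
  set M : Matrix (Fin d) (Fin d) ℂ := W * K * V with hM
  have hmul : ∀ X Y : Matrix (Fin d) (Fin d) ℂ, (V * X * W) * (V * Y * W) = V * (X * Y) * W := by
    intro X Y
    calc (V * X * W) * (V * Y * W) = V * X * (W * V) * (Y * W) := by
          simp only [Matrix.mul_assoc]
      _ = V * (X * Y) * W := by rw [hWV, Matrix.mul_one]; simp only [Matrix.mul_assoc]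
  have hK : K = V * M * W := by
    rw [hM]
    calc K = (V * W) * K * (V * W) := by rw [hVW, Matrix.one_mul, Matrix.mul_one]
      _ = V * (W * K * V) * W := by simp only [Matrix.mul_assoc]
  have hKH : Kᴴ = V * Mᴴ * W := by
    conv_lhs => rw [hK]
    rw [hW]
    simp only [conjTranspose_mul, star_eq_conjTranspose, conjTranspose_conjTranspose]
    simp only [Matrix.mul_assoc]
  have hC1 : mpow ρ α * Kᴴ - Kᴴ * mpow ρ α = V * (D₁ * Mᴴ - Mᴴ * D₁) * W := by
    rw [mpow_eq ρ hH α, hKH, ← hV, ← hW, ← hD₁, hmul, hmul, Matrix.mul_sub, Matrix.sub_mul]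
  have hC2 : mpow ρ (1 - α) * K - K * mpow ρ (1 - α) = V * (D₂ * M - M * D₂) * W := by
    conv_lhs => rw [mpow_eq ρ hH (1 - α), hK]
    rw [← hV, ← hW, ← hD₂, hmul, hmul, Matrix.mul_sub, Matrix.sub_mul]
  have htr : ((mpow ρ α * Kᴴ - Kᴴ * mpow ρ α) *
      (mpow ρ (1 - α) * K - K * mpow ρ (1 - α))).trace
      = ((D₁ * Mᴴ - Mᴴ * D₁) * (D₂ * M - M * D₂)).trace := by
    rw [hC1, hC2, hmul, trace_mul_cycle, ← Matrix.mul_assoc, hWV, Matrix.one_mul]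
  have hsum : ((D₁ * Mᴴ - Mᴴ * D₁) * (D₂ * M - M * D₂)).trace
      = ↑(∑ i, ∑ j, ((lam i ^ α - lam j ^ α) * (lam j ^ (1 - α) - lam i ^ (1 - α)))
          * Complex.normSq (M j i)) := by
    push_cast
    rw [Matrix.trace]
    apply Finset.sum_congr rfl
    intro i _
    rw [Matrix.diag_apply, Matrix.mul_apply]
    apply Finset.sum_congr rfl
    intro j _
    simp only [hD₁, hD₂, Matrix.sub_apply, Matrix.diagonal_mul, Matrix.mul_diagonal,
      Matrix.conjTranspose_apply]
    rw [Complex.star_def]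
    linear_combination -(((lam i ^ α : ℝ) : ℂ) - ((lam j ^ α : ℝ) : ℂ)) *
      (((lam j ^ (1 - α) : ℝ) : ℂ) - ((lam i ^ (1 - α) : ℝ) : ℂ)) *
      (Complex.normSq_eq_conj_mul_self (z := M j i))
  rw [wyd, htr, hsum]
  rw [show (-(1/2 : ℂ)) * ↑(∑ i, ∑ j, ((lam i ^ α - lam j ^ α) * (lam j ^ (1 - α) - lam i ^ (1 - α)))
          * Complex.normSq (M j i))
      = ((-(1/2 : ℝ)) * (∑ i, ∑ j, ((lam i ^ α - lam j ^ α) * (lam j ^ (1 - α) - lam i ^ (1 - α)))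
          * Complex.normSq (M j i)) : ℝ) from by push_cast; ring]
  rw [Complex.ofReal_re]
  have hle : (∑ i, ∑ j, ((lam i ^ α - lam j ^ α) * (lam j ^ (1 - α) - lam i ^ (1 - α)))
      * Complex.normSq (M j i)) ≤ 0 := by
    apply Finset.sum_nonpos
    intro i _
    apply Finset.sum_nonpos
    intro j _
    have h1 := diag_term_nonneg (hlamnn i) (hlamnn j) hα0.le (by linarith : (0:ℝ) ≤ 1 - α)
    nlinarith [Complex.normSq_nonneg (M j i)]
  linarith

lemma wyd_parallelogram {d : ℕ} (ρ : Matrix (Fin d) (Fin d) ℂ) (α : ℝ)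
    (A B : Matrix (Fin d) (Fin d) ℂ) :
    wyd ρ α (A + B) + wyd ρ α (A - B) = 2 * wyd ρ α A + 2 * wyd ρ α B := by
  set P := mpow ρ α
  set Q := mpow ρ (1 - α)
  have key : (P * (A+B)ᴴ - (A+B)ᴴ * P) * (Q * (A+B) - (A+B) * Q)
      + (P * (A-B)ᴴ - (A-B)ᴴ * P) * (Q * (A-B) - (A-B) * Q)
      = ((P * Aᴴ - Aᴴ * P) * (Q * A - A * Q) + (P * Aᴴ - Aᴴ * P) * (Q * A - A * Q))
      + ((P * Bᴴ - Bᴴ * P) * (Q * B - B * Q) + (P * Bᴴ - Bᴴ * P) * (Q * B - B * Q)) := by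
    simp only [conjTranspose_add, conjTranspose_sub]
    noncomm_ring
  have htr := congrArg Matrix.trace key
  simp only [Matrix.trace_add] at htr
  unfold wyd
  rw [← Complex.add_re, ← mul_add, htr]
  simp only [mul_add, Complex.add_re, Complex.mul_re]
  ring

lemma wyd_neg {d : ℕ} (ρ : Matrix (Fin d) (Fin d) ℂ) (α : ℝ)
    (K : Matrix (Fin d) (Fin d) ℂ) : wyd ρ α (-K) = wyd ρ α K := by
  unfold wyd
  congr 2
  simp only [conjTranspose_neg]
  noncomm_ring

lemma pair_sum {N : ℕ} (f : Fin N → ℝ) :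
    ∑ p ∈ univ.filter (fun p : Fin N × Fin N => p.1 < p.2), (f p.1 + f p.2)
      = ((N : ℝ) - 1) * ∑ s, f s := by
  have h2 : ∑ p ∈ univ.filter (fun p : Fin N × Fin N => p.1 < p.2), f p.2
      = ∑ p ∈ univ.filter (fun p : Fin N × Fin N => p.2 < p.1), f p.1 := by
    apply Finset.sum_nbij' (i := Prod.swap) (j := Prod.swap) <;>
      simp [Finset.mem_filter]
  rw [Finset.sum_add_distrib, h2, ← Finset.sum_union (by
    rw [Finset.disjoint_filter]
    intro p _ h1
    simp only [not_lt]
    exact h1.le)]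
  have hU : univ.filter (fun p : Fin N × Fin N => p.1 < p.2) ∪
      univ.filter (fun p : Fin N × Fin N => p.2 < p.1)
      = univ.filter (fun p : Fin N × Fin N => p.1 ≠ p.2) := by
    ext p
    simp only [Finset.mem_union, Finset.mem_filter, Finset.mem_univ, true_and]
    constructor
    · rintro (h | h)
      · exact h.ne
      · exact h.ne'
    · intro h
      exact h.lt_or_gt
  rw [hU, Finset.sum_filter, ← Finset.univ_product_univ, Finset.sum_product]
  have : ∀ a : Fin N, (∑ b : Fin N, if a ≠ b then f a else 0) = (N : ℝ) * f a - f a := by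
    intro a
    have : ∀ b : Fin N, (if a ≠ b then f a else 0) = f a - (if a = b then f a else 0) := by
      intro b
      by_cases h : a = b <;> simp [h]
    simp only [this]
    rw [Finset.sum_sub_distrib, Finset.sum_const, Finset.sum_ite_eq, if_pos (Finset.mem_univ a)]
    simp [mul_comm]
  simp only [this]
  rw [Finset.sum_sub_distrib, ← Finset.mul_sum]
  ring

lemma core {d N : ℕ} (hN : 2 ≤ N) (ρ : Matrix (Fin d) (Fin d) ℂ) (hρ : ρ.PosSemidef)
    {α : ℝ} (hα0 : 0 < α) (hα1 : α < 1)
    (U : Fin N → Matrix (Fin d) (Fin d) ℂ) (ε : ℂ) (hε : ε = 1 ∨ ε = -1) :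
    ∑ s, wyd ρ α (U s) ≥ (1 / (2 * (N : ℝ) - 2)) *
      ((∑ p ∈ univ.filter (fun p : Fin N × Fin N => p.1 < p.2), wyd ρ α (U p.1 + ε • U p.2)) +
        (2 / ((N : ℝ) * ((N : ℝ) - 1))) *
          (∑ p ∈ univ.filter (fun p : Fin N × Fin N => p.1 < p.2),
            Real.sqrt (wyd ρ α (U p.1 - ε • U p.2))) ^ 2) := by
  set P := univ.filter (fun p : Fin N × Fin N => p.1 < p.2) with hP
  set S := ∑ s, wyd ρ α (U s) with hS
  set A := ∑ p ∈ P, wyd ρ α (U p.1 + ε • U p.2) with hA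
  set B := ∑ p ∈ P, wyd ρ α (U p.1 - ε • U p.2) with hB
  set T := ∑ p ∈ P, Real.sqrt (wyd ρ α (U p.1 - ε • U p.2)) with hT
  have hsm : ∀ K : Matrix (Fin d) (Fin d) ℂ, wyd ρ α (ε • K) = wyd ρ α K := by
    rcases hε with rfl | rfl
    · simp
    · intro K
      rw [show (-1 : ℂ) • K = -K by simp, wyd_neg]
  have hpar : ∀ p ∈ P, wyd ρ α (U p.1 + ε • U p.2) + wyd ρ α (U p.1 - ε • U p.2)
      = 2 * wyd ρ α (U p.1) + 2 * wyd ρ α (U p.2) := by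
    intro p _
    rw [wyd_parallelogram ρ α (U p.1) (ε • U p.2), hsm]
  have hAB : A + B = ((N : ℝ) - 1) * (2 * S) := by
    rw [hA, hB, ← Finset.sum_add_distrib, Finset.sum_congr rfl hpar,
      pair_sum (fun s => 2 * wyd ρ α (U s)), ← Finset.mul_sum]
  have hBnn : (0:ℝ) ≤ B :=
    Finset.sum_nonneg fun p _ => wyd_nonneg ρ hρ hα0 hα1 _
  have hCS : T ^ 2 ≤ (P.card : ℝ) * B := by
    have h := sq_sum_le_card_mul_sum_sq
      (s := P) (f := fun p => Real.sqrt (wyd ρ α (U p.1 - ε • U p.2)))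
    rw [hT, hB]
    refine h.trans (le_of_eq ?_)
    congr 1
    apply Finset.sum_congr rfl
    intro p _
    exact Real.sq_sqrt (wyd_nonneg ρ hρ hα0 hα1 _)
  have hcard : (P.card : ℝ) * 2 = (N : ℝ) * ((N : ℝ) - 1) := by
    have h := pair_sum (fun _ : Fin N => (1 : ℝ))
    simp only [Finset.sum_const, nsmul_eq_mul, mul_one, Finset.card_univ, Fintype.card_fin,
      ← hP] at h
    linarith [h]
  have hn : (2 : ℝ) ≤ (N : ℝ) := by exact_mod_cast hN
  have hpos : (0:ℝ) < (N : ℝ) * ((N : ℝ) - 1) := by nlinarith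
  have h1 : (2 / ((N : ℝ) * ((N : ℝ) - 1))) * T ^ 2 ≤ B := by
    rw [div_mul_eq_mul_div, div_le_iff₀ hpos]
    nlinarith [hCS, hcard, hBnn]
  have h3 : (0:ℝ) < 2 * (N : ℝ) - 2 := by linarith
  have hfin : (1 / (2 * (N : ℝ) - 2)) * (A + (2 / ((N : ℝ) * ((N : ℝ) - 1))) * T ^ 2)
      ≤ (1 / (2 * (N : ℝ) - 2)) * (A + B) :=
    mul_le_mul_of_nonneg_left (by linarith) (by positivity)
  have heq : (1 / (2 * (N : ℝ) - 2)) * (A + B) = S := by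
    rw [hAB]
    rw [div_mul_eq_mul_div, one_mul, div_eq_iff h3.ne']
    ring
  rw [ge_iff_le]
  calc (1 / (2 * (N : ℝ) - 2)) * (A + (2 / ((N : ℝ) * ((N : ℝ) - 1))) * T ^ 2)
      ≤ (1 / (2 * (N : ℝ) - 2)) * (A + B) := hfin
    _ = S := heq

theorem unitary_uncertainty_Lb3 (d N : ℕ) (hN : 2 ≤ N)
    (ρ : Matrix (Fin d) (Fin d) ℂ) (hρ : ρ.PosSemidef) (hTr : ρ.trace = 1)
    (α : ℝ) (hα0 : 0 < α) (hα1 : α < 1)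
    (U : Fin N → Matrix (Fin d) (Fin d) ℂ)
    (hU : ∀ s, U s ∈ Matrix.unitaryGroup (Fin d) ℂ) :
    ∀ x ∈ ({0, 1} : Set ℕ),
      ∑ s, wyd ρ α (U s) ≥
        (1 / (2 * (N : ℝ) - 2)) *
          ((∑ p ∈ univ.filter (fun p : Fin N × Fin N => p.1 < p.2),
              wyd ρ α (U p.1 + ((-1 : ℂ) ^ x) • U p.2)) +
            (2 / ((N : ℝ) * ((N : ℝ) - 1))) *
              (∑ p ∈ univ.filter (fun p : Fin N × Fin N => p.1 < p.2),
                Real.sqrt (wyd ρ α (U p.1 + ((-1 : ℂ) ^ (x + 1)) • U p.2))) ^ 2) := by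
  intro x hx
  rcases hx with rfl | hx
  · have h := core hN ρ hρ hα0 hα1 U 1 (Or.inl rfl)
    simpa [sub_eq_add_neg] using h
  · rw [Set.mem_singleton_iff] at hx
    subst hx
    have h := core hN ρ hρ hα0 hα1 U (-1) (Or.inr rfl)
    simpa [sub_eq_add_neg, neg_one_sq] using h
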